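/- Let (x, A) be a seed with x=(x_1,…,x_n,y_1,…,y_n), and fix an index k with 1 ≤ k ≤ n. Then seed mutation at k is an involution: μ_k(μ_k(x,A)) = (x,A). Concretely, writing μ_k(x,A) = ((x'_1,…,x'_n,y_1,…,y_n), μ_k A) with x'_i = x_i for i ≠ k, and applying the mutation rule at k again to the seed μ_k(x,A) (using the matrix μ_k A), the resulting element x''_k = (x'_k)^{-1}(∏_{i=1}^n (x'_i)^{[a'_{ik}]_+} ∏_{i=1}^n y_i^{[a'_{n+i,k}]_+} + ∏_{i=1}^n (x'_i)^{[-a'_{ik}]_+} ∏_{i=1}^n y_i^{[-a'_{n+i,k}]_+}) equals x_k, where (a'_{ij}) = μ_k A. -/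

import Mathlib

noncomputable section

/-- The ambient field `F`: the field of rational functions in `2n` variables over `ℚ`,
realized as the fraction field of the polynomial ring in the `2n` indeterminates
`x_1, …, x_n` (indexed by `Sum.inl`) and `y_1, …, y_n` (indexed by `Sum.inr`). -/
abbrev CField (n : ℕ) : Type := FractionRing (MvPolynomial (Fin n ⊕ Fin n) ℚ)

/-- Mutation of an integer matrix (rows indexed by `ρ`, columns by `Fin n`) at column `k`,
where `e : Fin n → ρ` identifies each column index with a row index.
`(μ_k A)_{ij} = -a_{ij}` if `i = k` or `j = k`, and
`(μ_k A)_{ij} = a_{ij} + a_{ik}[a_{kj}]_+ + [-a_{ik}]_+ a_{kj}` otherwise, where `[a]_+ = max a 0`. -/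
def matMutate {ρ : Type*} [DecidableEq ρ] {n : ℕ} (e : Fin n → ρ)
    (A : Matrix ρ (Fin n) ℤ) (k : Fin n) : Matrix ρ (Fin n) ℤ :=
  fun i j =>
    if i = e k ∨ j = k then -A i j
    else A i j + A i k * max (A (e k) j) 0 + max (-A i k) 0 * A (e k) j

/-- The mutated `2n`-tuple of the seed mutation at `k`:
`x'_i = x_i` for `i ≠ k`, the coefficients `y_i` are unchanged, and
`x'_k = x_k⁻¹ (∏ x_i^{[a_{ik}]_+} ∏ y_i^{[a_{n+i,k}]_+} + ∏ x_i^{[-a_{ik}]_+} ∏ y_i^{[-a_{n+i,k}]_+})`,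
where `[a]_+ = max a 0` (note `Int.toNat a = max a 0` as a natural number). -/
def seedMutX {n : ℕ} (x : Fin n ⊕ Fin n → CField n)
    (A : Matrix (Fin n ⊕ Fin n) (Fin n) ℤ) (k : Fin n) : Fin n ⊕ Fin n → CField n
  | Sum.inl i =>
      if i = k then
        (x (Sum.inl k))⁻¹ *
          ((∏ i' : Fin n, x (Sum.inl i') ^ (A (Sum.inl i') k).toNat) *
              (∏ i' : Fin n, x (Sum.inr i') ^ (A (Sum.inr i') k).toNat) +
            (∏ i' : Fin n, x (Sum.inl i') ^ (-(A (Sum.inl i') k)).toNat) *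
              (∏ i' : Fin n, x (Sum.inr i') ^ (-(A (Sum.inr i') k)).toNat))
      else x (Sum.inl i)
  | Sum.inr i => x (Sum.inr i)

/-- Seed mutation at `k` is an involution: applying the mutation rule at `k`
twice to a seed `(x, A)` returns the seed `(x, A)` itself (both the matrix part and the
`2n`-tuple of cluster variables and coefficients). -/

lemma seedMutX_inl_self {n : ℕ} (x : Fin n ⊕ Fin n → CField n)
    (A : Matrix (Fin n ⊕ Fin n) (Fin n) ℤ) (k : Fin n) :
    seedMutX x A k (Sum.inl k) =
      (x (Sum.inl k))⁻¹ *
        ((∏ i' : Fin n, x (Sum.inl i') ^ (A (Sum.inl i') k).toNat) *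
            (∏ i' : Fin n, x (Sum.inr i') ^ (A (Sum.inr i') k).toNat) +
          (∏ i' : Fin n, x (Sum.inl i') ^ (-(A (Sum.inl i') k)).toNat) *
            (∏ i' : Fin n, x (Sum.inr i') ^ (-(A (Sum.inr i') k)).toNat)) := by
  simp [seedMutX]

theorem seed_mutation_involutive {n : ℕ} (x : Fin n ⊕ Fin n → CField n)
    (A : Matrix (Fin n ⊕ Fin n) (Fin n) ℤ)
    (hindep : AlgebraicIndependent ℚ x)
    (hgen : IntermediateField.adjoin ℚ (Set.range x) = ⊤)
    (hskew : ∃ d : Fin n → ℤ, (∀ i, 0 < d i) ∧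
      ∀ i j, A (Sum.inl i) j * d j = -A (Sum.inl j) i * d i)
    (k : Fin n) :
    matMutate Sum.inl (matMutate Sum.inl A k) k = A ∧
    seedMutX (seedMutX x A k) (matMutate Sum.inl A k) k = x := by
  obtain ⟨d, hd, hsk⟩ := hskew
  have hAkk : A (Sum.inl k) k = 0 := by
    have h := hsk k k
    have h2 := hd k
    nlinarith [h]
  have hmat : matMutate Sum.inl (matMutate Sum.inl A k) k = A := by
    funext i j
    by_cases hik : i = Sum.inl k
    · by_cases hjk : j = k <;> simp [matMutate, hik, hjk]
    · by_cases hjk : j = k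
      · simp [matMutate, hik, hjk]
      · simp only [matMutate, hik, hjk, or_self, if_false, or_true, or_false, if_true,
          eq_self_iff_true, neg_neg]
        rcases le_total (A (Sum.inl k) j) 0 with hb | hb <;>
          rcases le_total (A i k) 0 with hc | hc <;>
          simp [max_eq_left, max_eq_right, hb, hc, neg_nonneg.mpr, neg_nonpos.mpr] <;> ring
  refine ⟨hmat, ?_⟩
  -- key nonvanishing facts
  have key : ∀ p : MvPolynomial (Fin n ⊕ Fin n) ℚ, p ≠ 0 → (MvPolynomial.aeval x) p ≠ 0 := by
    intro p hp h0
    exact hp (hindep (by simpa using h0))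
  have hxk : x (Sum.inl k) ≠ 0 := by
    have := key (MvPolynomial.X (Sum.inl k)) (MvPolynomial.X_ne_zero _)
    simpa using this
  set P : CField n := (∏ i' : Fin n, x (Sum.inl i') ^ (A (Sum.inl i') k).toNat) *
      (∏ i' : Fin n, x (Sum.inr i') ^ (A (Sum.inr i') k).toNat) with hP
  set Q : CField n := (∏ i' : Fin n, x (Sum.inl i') ^ (-(A (Sum.inl i') k)).toNat) *
      (∏ i' : Fin n, x (Sum.inr i') ^ (-(A (Sum.inr i') k)).toNat) with hQ
  have hPQ : P + Q ≠ 0 := by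
    set p : MvPolynomial (Fin n ⊕ Fin n) ℚ :=
      (∏ i' : Fin n, MvPolynomial.X (Sum.inl i') ^ (A (Sum.inl i') k).toNat) *
        (∏ i' : Fin n, MvPolynomial.X (Sum.inr i') ^ (A (Sum.inr i') k).toNat) +
      (∏ i' : Fin n, MvPolynomial.X (Sum.inl i') ^ (-(A (Sum.inl i') k)).toNat) *
        (∏ i' : Fin n, MvPolynomial.X (Sum.inr i') ^ (-(A (Sum.inr i') k)).toNat) with hp
    have hev : MvPolynomial.eval (fun _ => (1 : ℚ)) p = 2 := by
      simp [hp]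
      norm_num
    have hpne : p ≠ 0 := by
      intro h
      rw [h] at hev
      simp at hev
    have := key p hpne
    have haev : (MvPolynomial.aeval x) p = P + Q := by
      simp [hp, hP, hQ]
    rwa [haev] at this
  have hM : ∀ r, matMutate Sum.inl A k r k = -A r k := by
    intro r; simp [matMutate]
  have hxk' : seedMutX x A k (Sum.inl k) = (x (Sum.inl k))⁻¹ * (P + Q) := by
    simp [seedMutX, hP, hQ]
  funext s
  cases s with
  | inr i => rfl
  | inl i =>
    by_cases hik : i = k
    · subst hik
      rw [seedMutX_inl_self]
      have h1 : (∏ i' : Fin n, seedMutX x A i (Sum.inl i') ^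
          (matMutate Sum.inl A i (Sum.inl i') i).toNat) =
          ∏ i' : Fin n, x (Sum.inl i') ^ (-(A (Sum.inl i') i)).toNat := by
        refine Finset.prod_congr rfl fun i' _ => ?_
        by_cases h : i' = i
        · subst h; simp [seedMutX, hM, hAkk]
        · simp [seedMutX, h, hM]
      have h2 : (∏ i' : Fin n, seedMutX x A i (Sum.inl i') ^
          (-(matMutate Sum.inl A i (Sum.inl i') i)).toNat) =
          ∏ i' : Fin n, x (Sum.inl i') ^ (A (Sum.inl i') i).toNat := by
        refine Finset.prod_congr rfl fun i' _ => ?_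
        by_cases h : i' = i
        · subst h; simp [seedMutX, hM, hAkk]
        · simp [seedMutX, h, hM]
      have h3 : (∏ i' : Fin n, seedMutX x A i (Sum.inr i') ^
          (matMutate Sum.inl A i (Sum.inr i') i).toNat) =
          ∏ i' : Fin n, x (Sum.inr i') ^ (-(A (Sum.inr i') i)).toNat := by
        refine Finset.prod_congr rfl fun i' _ => ?_
        simp [seedMutX, hM]
      have h4 : (∏ i' : Fin n, seedMutX x A i (Sum.inr i') ^
          (-(matMutate Sum.inl A i (Sum.inr i') i)).toNat) =
          ∏ i' : Fin n, x (Sum.inr i') ^ (A (Sum.inr i') i).toNat := by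
        refine Finset.prod_congr rfl fun i' _ => ?_
        simp [seedMutX, hM]
      rw [h1, h2, h3, h4, hxk']
      rw [← hP, ← hQ]
      field_simp
      exact add_comm _ _
    · simp [seedMutX, hik]
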